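/- Consider a deployment plan with n ≥ 1 heterogeneous fine-tuning replicas, where replica i uses Nᵢ > 0 GPUs and has average per-GPU throughput T̄ᵢ, with T̄₁ ≥ T̄₂ ≥ ⋯ ≥ T̄ₙ > 0, and let N = ∑_{i=1}^{n} Nᵢ be the total number of GPUs. Let Mᵢ ≥ 0 be the token load of replica i under length-based data dispatching, with running times tᵢ = Mᵢ/(Nᵢ·T̄ᵢ). Suppose the data are re-dispatched to loads Mᵢ′ ≥ 0 satisfying ∑_{j=1}^{k} Mⱼ′ ≤ ∑_{j=1}^{k} Mⱼ for every k and ∑_{j=1}^{n} Mⱼ′ = ∑_{j=1}^{n} Mⱼ, yielding running times tᵢ′ = Mᵢ′/(Nᵢ·T̄ᵢ), and let t̂ = max_{1 ≤ i ≤ n} tᵢ′ denote the maximum running time after re-dispatching. Then N·t̂ ≥ ∑_{i=1}^{n} Nᵢ·tᵢ. -/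
import Mathlib

lemma abel_aux (D w : ℕ → ℝ) (hpref : ∀ k, 0 ≤ ∑ i ∈ Finset.range (k+1), D i)
    (hw : ∀ k, w k ≤ w (k+1)) :
    ∀ m, ∑ i ∈ Finset.range m, D i * w i ≤ (∑ i ∈ Finset.range m, D i) * w m := by
  intro m
  induction m with
  | zero => simp
  | succ m ih =>
    rw [Finset.sum_range_succ, Finset.sum_range_succ]
    have h1 : ∑ i ∈ Finset.range m, D i * w i + D m * w m
        ≤ (∑ i ∈ Finset.range m, D i + D m) * w m := by nlinarith [ih]
    have h2 : 0 ≤ ∑ i ∈ Finset.range m, D i + D m := by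
      have := hpref m; rwa [Finset.sum_range_succ] at this
    nlinarith [mul_le_mul_of_nonneg_left (hw m) h2]

/-- For a deployment of `n` heterogeneous replicas sorted by descending
per-GPU throughput, if the length-based loads `M` are re-dispatched to loads `M'`
satisfying the prefix-sum migration constraints and token conservation, then
`N * t̂ ≥ ∑ i, Nᵢ * tᵢ`, where `t̂` is the maximum running time after re-dispatching. -/
theorem gpu_seconds_lower_bound
    (n : ℕ) (hn : 1 ≤ n) (N T M M' : ℕ → ℝ)
    (hN : ∀ i, i < n → 0 < N i)
    (hT : ∀ i, i < n → 0 < T i)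
    (hTmono : ∀ i j, i ≤ j → j < n → T j ≤ T i)
    (hM : ∀ i, i < n → 0 ≤ M i)
    (hM' : ∀ i, i < n → 0 ≤ M' i)
    (hprefix : ∀ k, k < n →
      ∑ j ∈ Finset.range (k + 1), M' j ≤ ∑ j ∈ Finset.range (k + 1), M j)
    (htotal : ∑ j ∈ Finset.range n, M' j = ∑ j ∈ Finset.range n, M j) :
    (∑ i ∈ Finset.range n, N i)
        * ((Finset.range n).sup' (Finset.nonempty_range_iff.mpr (by omega))
            (fun i => M' i / (N i * T i)))
      ≥ ∑ i ∈ Finset.range n, N i * (M i / (N i * T i)) := by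
  set t := (Finset.range n).sup' (Finset.nonempty_range_iff.mpr (by omega))
      (fun i => M' i / (N i * T i)) with ht
  -- extended difference and weights
  set D : ℕ → ℝ := fun i => if i < n then M i - M' i else 0 with hD
  set w : ℕ → ℝ := fun i => (T (min i (n-1)))⁻¹ with hw
  have hTpos : ∀ k, 0 < T (min k (n-1)) := fun k => hT _ (by omega)
  have hwmono : ∀ k, w k ≤ w (k+1) := by
    intro k
    apply inv_anti₀ (hTpos (k+1))
    exact hTmono _ _ (by omega) (by omega)
  have hpref : ∀ k, 0 ≤ ∑ i ∈ Finset.range (k+1), D i := by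
    intro k
    by_cases h : k < n
    · have : ∑ i ∈ Finset.range (k+1), D i
          = ∑ i ∈ Finset.range (k+1), (M i - M' i) := by
        apply Finset.sum_congr rfl
        intro i hi
        simp only [hD]
        rw [if_pos (by simp at hi; omega)]
      rw [this, Finset.sum_sub_distrib]
      have := hprefix k h
      linarith
    · have : ∑ i ∈ Finset.range (k+1), D i = ∑ i ∈ Finset.range n, D i := by
        apply (Finset.sum_subset _ _).symm
        · exact Finset.range_subset_range.mpr (by omega)
        · intro i _ hi
          simp only [hD]
          rw [if_neg (by simp at hi; omega)]
      rw [this]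
      have : ∑ i ∈ Finset.range n, D i = ∑ i ∈ Finset.range n, (M i - M' i) := by
        apply Finset.sum_congr rfl
        intro i hi
        simp only [hD]
        rw [if_pos (by simpa using hi)]
      rw [this, Finset.sum_sub_distrib]
      linarith
  have habel := abel_aux D w hpref hwmono n
  have htot0 : ∑ i ∈ Finset.range n, D i = 0 := by
    have : ∑ i ∈ Finset.range n, D i = ∑ i ∈ Finset.range n, (M i - M' i) := by
      apply Finset.sum_congr rfl
      intro i hi
      simp only [hD]
      rw [if_pos (by simpa using hi)]
    rw [this, Finset.sum_sub_distrib]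
    linarith
  rw [htot0, zero_mul] at habel
  -- ∑ D i * w i = ∑ M i / T i - ∑ M' i / T i
  have hdw : ∑ i ∈ Finset.range n, D i * w i
      = ∑ i ∈ Finset.range n, M i / T i - ∑ i ∈ Finset.range n, M' i / T i := by
    rw [← Finset.sum_sub_distrib]
    apply Finset.sum_congr rfl
    intro i hi
    simp only [hD, hw]
    have hi' : i < n := by simpa using hi
    rw [if_pos hi', min_eq_left (by omega)]
    ring
  have key : ∑ i ∈ Finset.range n, M i / T i ≤ ∑ i ∈ Finset.range n, M' i / T i := by
    rw [hdw] at habel; linarith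
  -- rewrite LHS goal
  have hL : ∀ i ∈ Finset.range n, N i * (M i / (N i * T i)) = M i / T i := by
    intro i hi
    have hi' : i < n := by simpa using hi
    rw [mul_div_assoc']
    exact mul_div_mul_left _ _ (hN i hi').ne'
  rw [Finset.sum_congr rfl hL, ge_iff_le]
  have hstep : ∑ i ∈ Finset.range n, M' i / T i
      ≤ ∑ i ∈ Finset.range n, N i * t := by
    apply Finset.sum_le_sum
    intro i hi
    have hi' : i < n := by simpa using hi
    have h1 : M' i / (N i * T i) ≤ t :=
      ht ▸ Finset.le_sup' (fun j => M' j / (N j * T j)) hi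
    have h2 : M' i / T i = N i * (M' i / (N i * T i)) := by
      rw [mul_div_assoc']
      exact (mul_div_mul_left _ _ (hN i hi').ne').symm
    rw [h2]
    exact mul_le_mul_of_nonneg_left h1 (hN i hi').le
  rw [← Finset.sum_mul] at hstep
  linarith
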